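/- Let σ < 0, δ < 0 with σ² + 4δ = 0, let A = [[σ, δ], [1, 0]], and let r = σ/2. Fix ρ ≥ 0 and let S₂ = {(x, y) ∈ Σ_ρ⁺ \ Σ_ρ : x < r·y}. Then for every q ∈ S₂ there exists t² > 0 such that exp(t²·A)·q ∈ Σ_ρ. -/

import Mathlib

open Matrix Filter

lemma exp_sq_zero {M : Matrix (Fin 2) (Fin 2) ℝ} (h : M * M = 0) :
    NormedSpace.exp M = 1 + M := by
  rw [NormedSpace.exp_eq_tsum ℝ]
  simp only
  have hpow : ∀ n, 2 ≤ n → M ^ n = 0 := by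
    intro n hn
    obtain ⟨k, rfl⟩ := Nat.exists_eq_add_of_le hn
    rw [pow_add, pow_two, h, zero_mul]
  rw [tsum_eq_sum (s := {0, 1}) (by
    intro n hn
    simp only [Finset.mem_insert, Finset.mem_singleton] at hn
    push_neg at hn
    rw [hpow n (by omega), smul_zero])]
  simp [pow_one]

lemma exp_smul_one (c : ℝ) :
    NormedSpace.exp (c • (1 : Matrix (Fin 2) (Fin 2) ℝ)) = Real.exp c • 1 := by
  have h1 : c • (1 : Matrix (Fin 2) (Fin 2) ℝ) = diagonal (fun _ => c) := by
    rw [smul_eq_diagonal_mul]; simp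
  rw [h1, Matrix.exp_diagonal]
  have h2 : NormedSpace.exp (fun _ : Fin 2 => c) = fun _ : Fin 2 => Real.exp c := by
    rw [Pi.exp_def, Real.exp_eq_exp_ℝ]
  rw [h2]
  ext i j
  simp [diagonal, Matrix.smul_apply, Matrix.one_apply]

theorem stmt_8 (σ δ ρ : ℝ) (hσ : σ < 0) (hδ : δ < 0) (hdisc : σ ^ 2 + 4 * δ = 0)
    (hρ : 0 ≤ ρ)
    (A : Matrix (Fin 2) (Fin 2) ℝ) (hA : A = !![σ, δ; 1, 0])
    (r : ℝ) (hr : r = σ / 2)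
    (h : (Fin 2 → ℝ) → ℝ)
    (hh : ∀ p : Fin 2 → ℝ, h p = if p 0 ≤ 0 then p 1 else p 1 - ρ * p 0)
    (Sig SigPlus S₂ : Set (Fin 2 → ℝ))
    (hSig : Sig = {p | h p = 0}) (hSigPlus : SigPlus = {p | 0 ≤ h p})
    (hS₂ : S₂ = {p ∈ SigPlus \ Sig | p 0 < r * p 1}) :
    ∀ q ∈ S₂, ∃ t₂ : ℝ, 0 < t₂ ∧ (NormedSpace.exp (t₂ • A)).mulVec q ∈ Sig := by
  intro q hq
  -- h is a min
  have hhmin : ∀ p : Fin 2 → ℝ, h p = min (p 1) (p 1 - ρ * p 0) := by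
    intro p
    rw [hh p]
    rcases le_or_gt (p 0) 0 with h0 | h0
    · rw [if_pos h0, min_eq_left]
      nlinarith
    · rw [if_neg (not_le.mpr h0), min_eq_right]
      nlinarith
  have hδr : δ = -(r * r) := by rw [hr]; nlinarith
  -- decompose A
  set N : Matrix (Fin 2) (Fin 2) ℝ := !![r, δ; 1, -r] with hN
  have hAN : A = r • (1 : Matrix (Fin 2) (Fin 2) ℝ) + N := by
    rw [hA, hN]
    ext i j
    fin_cases i <;> fin_cases j <;>
      simp [Matrix.smul_apply, Matrix.one_apply, hr] <;> ring
  have hN2 : ∀ t : ℝ, (t • N) * (t • N) = 0 := by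
    intro t
    rw [smul_mul_smul_comm]
    have : N * N = 0 := by
      rw [hN]
      ext i j
      fin_cases i <;> fin_cases j <;>
        simp [Matrix.mul_apply, Fin.sum_univ_two, hδr] <;> ring
    rw [this, smul_zero]
  have hexp : ∀ t : ℝ, NormedSpace.exp (t • A) =
      Real.exp (t * r) • (1 + t • N) := by
    intro t
    rw [hAN, smul_add, smul_smul]
    rw [Matrix.exp_add_of_commute _ _ (Commute.smul_left (Commute.one_left N) _ |>.smul_right t)]
    rw [exp_smul_one, exp_sq_zero (hN2 t), smul_mul_assoc, one_mul]
  -- explicit components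
  have hcomp : ∀ t : ℝ,
      ((NormedSpace.exp (t • A)).mulVec q 0 =
        Real.exp (t * r) * ((1 + t * r) * q 0 + t * δ * q 1)) ∧
      ((NormedSpace.exp (t • A)).mulVec q 1 =
        Real.exp (t * r) * (t * q 0 + (1 - t * r) * q 1)) := by
    intro t
    rw [hexp t]
    constructor <;>
    · simp [Matrix.mulVec, Matrix.smul_apply, dotProduct, Fin.sum_univ_two, hN,
        Matrix.add_apply, Matrix.one_apply, Matrix.smul_apply]
      ring
  -- the scalar function
  set g : ℝ → ℝ := fun t => h ((NormedSpace.exp (t • A)).mulVec q) with hg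
  have hgeq : ∀ t, g t = min (Real.exp (t * r) * (t * q 0 + (1 - t * r) * q 1))
      (Real.exp (t * r) * (t * q 0 + (1 - t * r) * q 1)
        - ρ * (Real.exp (t * r) * ((1 + t * r) * q 0 + t * δ * q 1))) := by
    intro t
    rw [hg]
    simp only
    rw [hhmin, (hcomp t).1, (hcomp t).2]
  have hgcont : Continuous g := by
    have : g = fun t => min (Real.exp (t * r) * (t * q 0 + (1 - t * r) * q 1))
      (Real.exp (t * r) * (t * q 0 + (1 - t * r) * q 1)
        - ρ * (Real.exp (t * r) * ((1 + t * r) * q 0 + t * δ * q 1))) := funext hgeq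
    rw [this]
    fun_prop
  -- facts about q
  rw [hS₂] at hq
  obtain ⟨⟨hqplus, hqnotsig⟩, hqlt⟩ := hq
  rw [hSigPlus] at hqplus
  rw [hSig] at hqnotsig
  have hq0 : 0 < h q := lt_of_le_of_ne hqplus (fun e => hqnotsig e.symm)
  have hg0 : 0 < g 0 := by
    have : (NormedSpace.exp ((0:ℝ) • A)).mulVec q = q := by
      rw [zero_smul, NormedSpace.exp_zero, Matrix.one_mulVec]
    rw [hg]; simp only; rw [this]; exact hq0
  -- choose T
  have hden : 0 < r * q 1 - q 0 := by linarith
  set T : ℝ := max 1 (q 1 / (r * q 1 - q 0)) with hT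
  have hT0 : 0 < T := lt_of_lt_of_le one_pos (le_max_left _ _)
  have hyT : T * q 0 + (1 - T * r) * q 1 ≤ 0 := by
    have h1 : q 1 / (r * q 1 - q 0) ≤ T := le_max_right _ _
    have h2 : q 1 ≤ T * (r * q 1 - q 0) := by
      rw [div_le_iff₀ hden] at h1
      linarith
    nlinarith
  have hgT : g T ≤ 0 := by
    rw [hgeq]
    refine min_le_of_left_le ?_
    exact mul_nonpos_of_nonneg_of_nonpos (Real.exp_pos _).le hyT
  -- IVT
  have hsub : Set.Icc (g T) (g 0) ⊆ g '' Set.Icc 0 T :=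
    intermediate_value_Icc' hT0.le hgcont.continuousOn
  obtain ⟨t₂, ht₂mem, ht₂⟩ := hsub ⟨hgT, hg0.le⟩
  refine ⟨t₂, ?_, ?_⟩
  · rcases lt_or_eq_of_le ht₂mem.1 with h' | h'
    · exact h'
    · exfalso; rw [← h'] at ht₂; rw [ht₂] at hg0; exact lt_irrefl 0 hg0
  · rw [hSig]
    exact ht₂
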